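/- Let Λ_m ∈ M(m, ℂ) and Λ_{m+1} ∈ M(m+1, ℂ) be diagonal matrices, all m + (m+1) diagonal entries pairwise distinct, and c ∈ ℂ^m with all entries nonzero. Define g ∈ M(m+1, ℂ) by g_{ij} = -c_i/( (Λ_m)_{ii} - (Λ_{m+1})_{jj} ) for 1 ≤ i ≤ m, and g_{m+1,j} = 1, for 1 ≤ j ≤ m+1. Then g is invertible, and the matrix g Λ_{m+1} g^{-1} has leading principal m×m submatrix equal to Λ_m, first m entries of its last column equal to c, and the entries b of its last row satisfy b_i c_i = -P_{m+1}(μ_i)/P_m'(μ_i), where μ_i = (Λ_m)_{ii}, P_m(λ) = ∏_i (λ - μ_i), and P_{m+1}(λ) = ∏_j (λ - (Λ_{m+1})_{jj}). -/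

import Mathlib

open Matrix Polynomial Finset

lemma pf_aux {m : ℕ} (μ : Fin m → ℂ) (ν : Fin (m + 1) → ℂ)
    (hμ : Function.Injective μ) (j0 : Fin (m + 1)) (hμν : ∀ i j, μ i ≠ ν j) :
    ∑ i : Fin m, (∏ j : Fin (m + 1), (μ i - ν j)) /
        ((∏ k ∈ univ.erase i, (μ i - μ k)) * (μ i - ν j0))
      = ν j0 - ∑ j, ν j + ∑ i, μ i := by
  rcases Nat.eq_zero_or_pos m with hm | hm
  · subst hm
    simp [Fin.eq_zero j0, Fin.sum_univ_one]
  set s : ℂ := (∑ j, ν j) - ∑ i, μ i with hs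
  set P : ℂ[X] := ∏ i : Fin m, (X - C (μ i)) with hP
  set Pn : ℂ[X] := ∏ j : Fin (m + 1), (X - C (ν j)) with hPn
  set Q : ℂ[X] := Pn - (X - C s) * P with hQ
  have hPm : P.Monic := monic_prod_of_monic _ _ fun i _ => monic_X_sub_C _
  have hPnm : Pn.Monic := monic_prod_of_monic _ _ fun i _ => monic_X_sub_C _
  have hPd : P.natDegree = m := by
    rw [hP, natDegree_prod_of_monic _ _ fun i _ => monic_X_sub_C _]
    simp
  have hPnd : Pn.natDegree = m + 1 := by
    rw [hPn, natDegree_prod_of_monic _ _ fun i _ => monic_X_sub_C _]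
    simp
  have hPnext : P.coeff (m - 1) = -∑ i, μ i := by
    have := prod_X_sub_C_coeff_card_pred (univ : Finset (Fin m)) μ (by simpa using hm)
    simpa using this
  have hPnnext : Pn.coeff m = -∑ j, ν j := by
    have := prod_X_sub_C_coeff_card_pred (univ : Finset (Fin (m + 1))) ν (by simp)
    simpa using this
  have hQdeg : Q.degree < (m : ℕ) := by
    rw [degree_lt_iff_coeff_zero]
    intro k hk
    obtain ⟨k', rfl⟩ : ∃ k', k = k' + 1 := ⟨k - 1, by omega⟩
    have hXP : ((X - C s) * P).coeff (k' + 1) = P.coeff k' - s * P.coeff (k' + 1) := by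
      rw [sub_mul, coeff_sub, coeff_X_mul, coeff_C_mul]
    rw [hQ, coeff_sub, hXP]
    have h3 : k' + 1 = m ∨ k' + 1 = m + 1 ∨ m + 2 ≤ k' + 1 := by omega
    rcases h3 with h | h | h
    · have hk' : k' = m - 1 := by omega
      have hc : P.coeff m = 1 := by rw [← hPd]; exact hPm.coeff_natDegree
      rw [h, hk', hPnnext, hPnext, hc, hs]
      ring
    · have hk2 : k' = m := by omega
      rw [hk2]
      have h1 : Pn.coeff (m + 1) = 1 := by rw [← hPnd]; exact hPnm.coeff_natDegree
      have h2 : P.coeff m = 1 := by rw [← hPd]; exact hPm.coeff_natDegree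
      have h4 : P.coeff (m + 1) = 0 := coeff_eq_zero_of_natDegree_lt (by omega)
      rw [h1, h2, h4]
      ring
    · have h1 : Pn.coeff (k' + 1) = 0 := coeff_eq_zero_of_natDegree_lt (by omega)
      have h2 : P.coeff k' = 0 := coeff_eq_zero_of_natDegree_lt (by omega)
      have h4 : P.coeff (k' + 1) = 0 := coeff_eq_zero_of_natDegree_lt (by omega)
      rw [h1, h2, h4]
      ring
  have hQi : Q = Lagrange.interpolate univ μ (fun i => Q.eval (μ i)) :=
    Lagrange.eq_interpolate hμ.injOn (by simpa using hQdeg)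
  have hQμ : ∀ i, Q.eval (μ i) = ∏ j, (μ i - ν j) := by
    intro i
    have hP0 : P.eval (μ i) = 0 := by
      rw [hP, eval_prod]
      exact prod_eq_zero (mem_univ i) (by simp)
    rw [hQ, eval_sub, eval_mul, hP0, hPn, eval_prod]
    simp
  have hQν : Q.eval (ν j0) = -((ν j0 - s) * ∏ i, (ν j0 - μ i)) := by
    have hPn0 : Pn.eval (ν j0) = 0 := by
      rw [hPn, eval_prod]
      exact prod_eq_zero (mem_univ j0) (by simp)
    rw [hQ, eval_sub, eval_mul, hPn0, hP, eval_prod]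
    simp
  have hmain : -((ν j0 - s) * ∏ i, (ν j0 - μ i)) =
      ∑ i, (∏ j, (μ i - ν j)) * ∏ k ∈ univ.erase i, ((μ i - μ k)⁻¹ * (ν j0 - μ k)) := by
    rw [← hQν]
    conv_lhs => rw [hQi]
    rw [Lagrange.interpolate_apply, eval_finset_sum]
    refine Finset.sum_congr rfl fun i _ => ?_
    rw [eval_mul, eval_C, hQμ, Lagrange.basis, eval_prod]
    congr 1
    refine Finset.prod_congr rfl fun k _ => ?_
    simp [Lagrange.basisDivisor]
  have hPr : (∏ i, (ν j0 - μ i)) ≠ 0 := by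
    rw [Finset.prod_ne_zero_iff]
    intro i _
    exact sub_ne_zero_of_ne (Ne.symm (hμν i j0))
  apply mul_right_cancel₀ hPr
  have key : (∑ i : Fin m, (∏ j : Fin (m + 1), (μ i - ν j)) /
        ((∏ k ∈ univ.erase i, (μ i - μ k)) * (μ i - ν j0))) * (∏ i, (ν j0 - μ i))
      = -∑ i, (∏ j, (μ i - ν j)) * ∏ k ∈ univ.erase i, ((μ i - μ k)⁻¹ * (ν j0 - μ k)) := by
    rw [Finset.sum_mul, ← Finset.sum_neg_distrib]
    refine Finset.sum_congr rfl fun i _ => ?_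
    have hD : (∏ k ∈ univ.erase i, (μ i - μ k)) ≠ 0 := by
      rw [Finset.prod_ne_zero_iff]
      intro k hk
      exact sub_ne_zero_of_ne fun h => (Finset.mem_erase.mp hk).1.symm (hμ h)
    have hd : μ i - ν j0 ≠ 0 := sub_ne_zero_of_ne (hμν i j0)
    rw [← Finset.mul_prod_erase _ _ (mem_univ i), Finset.prod_mul_distrib,
      Finset.prod_inv_distrib]
    field_simp
    ring
  rw [key, ← hmain, hs]
  ring

/-- Inverse spectral construction of an arrow matrix: the matrix `g` of Cauchy-type
candidate eigenvectors (normalized to last entry `1`) is invertible, and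
`g Λ_{m+1} g⁻¹` has top-left block `Λ_m`, last column `c`, and last-row entries `b`
with `b_i c_i = -P_{m+1}(μ_i)/P_m'(μ_i)`. -/
theorem inverse_spectral_arrow_construction {m : ℕ}
    (μ : Fin m → ℂ) (ν : Fin (m + 1) → ℂ)
    (hμ : Function.Injective μ) (hν : Function.Injective ν)
    (hμν : ∀ (i : Fin m) (j : Fin (m + 1)), μ i ≠ ν j)
    (c : Fin m → ℂ) (hc : ∀ i, c i ≠ 0)
    (g : Matrix (Fin (m + 1)) (Fin (m + 1)) ℂ)
    (hg : ∀ (i : Fin m) (j : Fin (m + 1)),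
      g i.castSucc j = -c i / (μ i - ν j))
    (hg1 : ∀ j : Fin (m + 1), g (Fin.last m) j = 1) :
    IsUnit g ∧
    (∀ i j : Fin m,
      (g * Matrix.diagonal ν * g⁻¹) i.castSucc j.castSucc =
        if i = j then μ i else 0) ∧
    (∀ i : Fin m, (g * Matrix.diagonal ν * g⁻¹) i.castSucc (Fin.last m) = c i) ∧
    (∀ i : Fin m,
      (g * Matrix.diagonal ν * g⁻¹) (Fin.last m) i.castSucc * c i =
        -(∏ j : Fin (m + 1), (μ i - ν j)) /
          (∏ j ∈ univ.erase i, (μ i - μ j))) := by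
  have hD : ∀ i : Fin m, (∏ k ∈ univ.erase i, (μ i - μ k)) ≠ 0 := by
    intro i
    rw [Finset.prod_ne_zero_iff]
    intro k hk
    exact sub_ne_zero_of_ne fun h => (Finset.mem_erase.mp hk).1.symm (hμ h)
  have hd : ∀ (i : Fin m) (j : Fin (m + 1)), μ i - ν j ≠ 0 :=
    fun i j => sub_ne_zero_of_ne (hμν i j)
  set b : Fin m → ℂ := fun i =>
    -(∏ j, (μ i - ν j)) / ((∏ k ∈ univ.erase i, (μ i - μ k)) * c i) with hb
  set t : ℂ := ∑ j, ν j - ∑ i, μ i with ht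
  set A : Matrix (Fin (m + 1)) (Fin (m + 1)) ℂ := Matrix.of fun p q =>
    Fin.lastCases (Fin.lastCases t b q)
      (fun i => Fin.lastCases (c i) (fun j => if i = j then μ i else 0) q) p with hA
  have hAcc : ∀ (i j : Fin m), A i.castSucc j.castSucc = if i = j then μ i else 0 := by
    intro i j; simp [hA]
  have hAcl : ∀ i : Fin m, A i.castSucc (Fin.last m) = c i := by
    intro i; simp [hA]
  have hAlc : ∀ j : Fin m, A (Fin.last m) j.castSucc = b j := by
    intro j; simp [hA]
  have hAll : A (Fin.last m) (Fin.last m) = t := by simp [hA]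
  -- the intertwining relation
  have hAg : A * g = g * Matrix.diagonal ν := by
    ext p j
    rw [Matrix.mul_apply, Matrix.mul_diagonal]
    induction p using Fin.lastCases with
    | last =>
      rw [Fin.sum_univ_castSucc]
      simp only [hAlc, hAll, hg, hg1]
      have key := pf_aux μ ν hμ j hμν
      have : ∀ i : Fin m, b i * (-c i / (μ i - ν j)) =
          (∏ l : Fin (m + 1), (μ i - ν l)) /
            ((∏ k ∈ univ.erase i, (μ i - μ k)) * (μ i - ν j)) := by
        intro i
        rw [hb]
        field_simp [hc i, hD i, hd i j]
      rw [Finset.sum_congr rfl fun i _ => this i, key, ht]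
      ring
    | cast i =>
      rw [Fin.sum_univ_castSucc]
      simp only [hAcc, hAcl, hg, hg1, ite_mul, zero_mul]
      rw [Finset.sum_ite_eq]
      simp only [mem_univ, if_true]
      field_simp [hd i j]
      ring
  -- invertibility of g
  have hgu : IsUnit g := by
    rw [← Matrix.linearIndependent_cols_iff_isUnit]
    apply Module.End.eigenvectors_linearIndependent' (Matrix.mulVecLin A) ν hν
    intro j
    constructor
    · rw [Module.End.mem_eigenspace_iff]
      ext i
      have := congrFun (congrFun hAg i) j
      rw [Matrix.mul_apply, Matrix.mul_diagonal] at this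
      simpa [Matrix.mulVecLin, Matrix.mulVec, dotProduct, mul_comm] using this
    · intro h0
      have := congrFun h0 (Fin.last m)
      rw [Matrix.col_apply, hg1] at this
      simp at this
  have hdet : IsUnit g.det := (Matrix.isUnit_iff_isUnit_det g).mp hgu
  have hfinal : g * Matrix.diagonal ν * g⁻¹ = A := by
    rw [← hAg, Matrix.mul_assoc, Matrix.mul_nonsing_inv g hdet, Matrix.mul_one]
  refine ⟨hgu, ?_, ?_, ?_⟩
  · intro i j; rw [hfinal]; exact hAcc i j
  · intro i; rw [hfinal]; exact hAcl i
  · intro i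
    rw [hfinal, hAlc, hb]
    field_simp [hc i, hD i]
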